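/- For every integer n ≥ 1, any mutually uncorrelated set of words of length n over the four-letter DNA alphabet {A,T,G,C} has size at most (4^n / n)·(1 − 1/n)^{n−1}. -/

import Mathlib

/-- The four-letter DNA alphabet. -/
inductive DNA | A | T | G | C
deriving DecidableEq

/-- Hamming distance between two words (of equal length) given as lists. -/
def hammingD {α : Type*} [DecidableEq α] (x y : List α) : ℕ :=
  (x.zip y).countP (fun p => decide (p.1 ≠ p.2))

/-- A binary word has `D`-bounded running digital sum if in every prefix the
numbers of ones and zeros differ by at most `D`. -/
def brds (D : ℕ) (w : List Bool) : Prop :=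
  ∀ k ≤ w.length,
    (((w.take k).count true : ℤ) - ((w.take k).count false : ℤ)).natAbs ≤ D

/-- The letters `G`, `C` of the DNA alphabet. -/
def isGC : DNA → Bool
  | DNA.G => true
  | DNA.C => true
  | _ => false

/-- A DNA word is `D`-GC-prefix-balanced if in every prefix the number of
letters from {G,C} and the number of letters from {A,T} differ by at most `D`. -/
def gcpb (D : ℕ) (w : List DNA) : Prop :=
  ∀ k ≤ w.length,
    (((w.take k).countP isGC : ℤ) - ((w.take k).countP (fun c => !(isGC c)) : ℤ)).natAbs ≤ D

/-- A word is self-uncorrelated if no proper nonempty prefix equals the suffix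
of the same length. -/
def selfUncorr {α : Type*} (w : List α) : Prop :=
  ∀ k, 1 ≤ k → k ≤ w.length - 1 → w.take k ≠ w.drop (w.length - k)

/-- A set of words is mutually uncorrelated if every word is self-uncorrelated
and for every ordered pair of distinct words `x`, `y` no nonempty prefix of `y`
equals a suffix of `x` of the same length. -/
def mutUncorr {α : Type*} (S : Set (List α)) : Prop :=
  (∀ w ∈ S, selfUncorr w) ∧
  ∀ x ∈ S, ∀ y ∈ S, x ≠ y →
    ∀ k, 1 ≤ k → k ≤ x.length → y.take k ≠ x.drop (x.length - k)

/-- A Dyck word: equal numbers of ones and zeros, and every prefix has at least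
as many ones as zeros. -/
def isDyck (w : List Bool) : Prop :=
  w.count true = w.count false ∧
  ∀ k ≤ w.length, (w.take k).count false ≤ (w.take k).count true

/-- The height of a (Dyck) word is at most `D`: in every prefix the number of
ones exceeds the number of zeros by at most `D`. -/
def heightLe (D : ℕ) (w : List Bool) : Prop :=
  ∀ k ≤ w.length, ((w.take k).count true : ℤ) - ((w.take k).count false : ℤ) ≤ (D : ℤ)

section StmtFourAux

instance : Fintype DNA := ⟨{DNA.A, DNA.T, DNA.G, DNA.C}, fun x => by cases x <;> simp⟩

def allW : ℕ → Finset (List DNA)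
  | 0 => {[]}
  | (ℓ+1) => (Finset.univ ×ˢ allW ℓ).image fun p => p.1 :: p.2

lemma mem_allW : ∀ {ℓ : ℕ} {w : List DNA}, w ∈ allW ℓ ↔ w.length = ℓ
  | 0, w => by simp [allW, List.length_eq_zero_iff]
  | (ℓ+1), w => by
    cases w with
    | nil => simp [allW]
    | cons h t => simp [allW, mem_allW (ℓ := ℓ) (w := t)]

lemma card_allW : ∀ ℓ, (allW ℓ).card = 4 ^ ℓ
  | 0 => rfl
  | (ℓ+1) => by
    rw [allW, Finset.card_image_of_injective _ (fun a b hab => by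
      simpa [Prod.ext_iff] using hab), Finset.card_product, card_allW ℓ]
    show 4 * 4 ^ ℓ = 4 ^ (ℓ+1)
    ring

def Free (S : Finset (List DNA)) (ℓ : ℕ) : Finset (List DNA) :=
  (allW ℓ).filter (fun w => ∀ c ∈ S, ¬ c <:+: w)

lemma mem_Free {S : Finset (List DNA)} {ℓ : ℕ} {w : List DNA} :
    w ∈ Free S ℓ ↔ w.length = ℓ ∧ ∀ c ∈ S, ¬ c <:+: w := by
  simp [Free, mem_allW]

lemma F0 {n : ℕ} (hn2 : 2 ≤ n) {S : Finset (List DNA)}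
    (hlen : ∀ w ∈ S, w.length = n)
    (hself : ∀ w ∈ (S : Set (List DNA)), selfUncorr w) (ℓ : ℕ) :
    1 ≤ (Free S ℓ).card := by
  refine Finset.card_pos.2 ⟨List.replicate ℓ DNA.A, mem_Free.2 ⟨List.length_replicate .., ?_⟩⟩
  intro c hc hinf
  have hcn : c.length = n := hlen c hc
  have hcl : c = List.replicate n DNA.A := by
    have := hcn
    rw [← this]
    refine List.eq_replicate_length.2 (fun b hb => ?_)
    have : b ∈ List.replicate ℓ DNA.A := hinf.sublist.subset hb
    exact List.eq_of_mem_replicate this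
  have := hself c hc 1 le_rfl (by omega : 1 ≤ c.length - 1)
  apply this
  subst hcl
  rw [List.length_replicate] at *
  rw [List.take_replicate, List.drop_replicate]
  congr 1
  omega

lemma tail_free {S : Finset (List DNA)} {w : List DNA}
    (hw : ∀ c ∈ S, ¬ c <:+: w) : ∀ c ∈ S, ¬ c <:+: w.tail := by
  intro c hc h
  exact hw c hc (h.trans (List.tail_suffix w).isInfix)

lemma F1 {S : Finset (List DNA)} (ℓ : ℕ) :
    (Free S (ℓ+1)).card ≤ 4 * (Free S ℓ).card := by
  classical
  have : Free S (ℓ+1) ⊆ (Finset.univ ×ˢ Free S ℓ).image fun p => p.1 :: p.2 := by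
    intro w hw
    rw [mem_Free] at hw
    obtain ⟨hl, hf⟩ := hw
    cases w with
    | nil => simp at hl
    | cons h t =>
      refine Finset.mem_image.2 ⟨(h, t), ?_, rfl⟩
      refine Finset.mem_product.2 ⟨Finset.mem_univ _, mem_Free.2 ⟨by simpa using hl, ?_⟩⟩
      exact tail_free hf
  calc (Free S (ℓ+1)).card ≤ _ := Finset.card_le_card this
    _ ≤ (Finset.univ ×ˢ Free S ℓ).card := Finset.card_image_le
    _ = 4 * (Free S ℓ).card := by
        rw [Finset.card_product]
        rfl

lemma keyUncorr {n : ℕ} (hn : 1 ≤ n) {S : Finset (List DNA)}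
    (hlen : ∀ w ∈ S, w.length = n)
    (hmu : mutUncorr (S : Set (List DNA)))
    {c v : List DNA} (hc : c ∈ S) (hv : ∀ d ∈ S, ¬ d <:+: v) :
    ∀ d ∈ S, ¬ d <:+: (c.tail ++ v) := by
  intro d hd hinf
  obtain ⟨a, b, hab⟩ := hinf
  have hcn : c.length = n := hlen c hc
  have hdn : d.length = n := hlen d hd
  have hct : c.tail.length = n - 1 := by simp [hcn]
  by_cases hs : n - 1 ≤ a.length
  · -- d is an infix of v
    apply hv d hd
    have h1 : (a ++ d ++ b).drop (n-1) = a.drop (n-1) ++ (d ++ b) := by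
      rw [List.append_assoc, List.drop_append]
      congr 1
      rw [Nat.sub_eq_zero_of_le hs, List.drop_zero]
    have h2 : (c.tail ++ v).drop (n-1) = v := by
      rw [← hct, List.drop_left]
    rw [hab, h2] at h1
    exact ⟨a.drop (n-1), b, by rw [List.append_assoc]; exact h1.symm⟩
  · -- overlap case
    push_neg at hs
    set s := a.length with hsdef
    set t := n - 1 - s with htdef
    have ht1 : 1 ≤ t := by omega
    have ht2 : t ≤ n - 1 := by omega
    have hst : s + t = n - 1 := by omega
    have htake : c.tail = a ++ d.take t := by
      have e1 : (c.tail ++ v).take (n-1) = c.tail := List.take_left' hct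
      have e2 : (a ++ d ++ b).take (n-1) = a ++ d.take t := by
        rw [List.append_assoc, List.take_append,
          List.take_of_length_le hs.le, List.take_append,
          show n - 1 - a.length = t from rfl,
          Nat.sub_eq_zero_of_le (by omega : t ≤ d.length), List.take_zero,
          List.append_nil]
      rw [← e1, ← hab, e2]
    have hkey : d.take t = c.drop (c.length - t) := by
      have h2 : (a ++ d.take t).drop s = d.take t := List.drop_left
      rw [← htake] at h2
      have h3 : c.tail.drop s = c.drop (s + 1) := by
        rw [← List.drop_one, List.drop_drop]
        congr 1
        omega
      rw [h3] at h2
      rw [← h2]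
      congr 1
      omega
    by_cases hdc : d = c
    · subst hdc
      exact hmu.1 d hd t ht1 (by omega) hkey
    · exact hmu.2 c hc d hd (fun h => hdc h.symm) t ht1 (by omega) hkey

lemma F2 {n : ℕ} (hn : 1 ≤ n) {S : Finset (List DNA)}
    (hlen : ∀ w ∈ S, w.length = n)
    (hmu : mutUncorr (S : Set (List DNA))) (ℓ : ℕ) :
    (Free S (n+ℓ)).card + S.card * (Free S ℓ).card ≤ 4 * (Free S (n-1+ℓ)).card := by
  classical
  set T : Finset (List DNA) :=
    (Finset.univ ×ˢ Free S (n-1+ℓ)).image (fun p => p.1 :: p.2) with hT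
  have hTcard : T.card = 4 * (Free S (n-1+ℓ)).card := by
    rw [hT, Finset.card_image_of_injective _ (fun p q hpq => by
      simpa [Prod.ext_iff] using hpq), Finset.card_product]
    rfl
  set U : Finset (List DNA) :=
    (S ×ˢ Free S ℓ).image (fun p => p.1 ++ p.2) with hU
  have hUcard : U.card = S.card * (Free S ℓ).card := by
    rw [hU, Finset.card_image_of_injOn, Finset.card_product]
    intro p hp q hq hpq
    simp only [Finset.mem_coe, Finset.mem_product] at hp hq
    have h1 : p.1.length = q.1.length := by
      rw [hlen _ hp.1, hlen _ hq.1]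
    obtain ⟨e1, e2⟩ := List.append_inj hpq h1
    exact Prod.ext e1 e2
  have hsub1 : Free S (n+ℓ) ⊆ T := by
    intro w hw
    rw [mem_Free] at hw
    obtain ⟨hl, hf⟩ := hw
    cases w with
    | nil => simp at hl; omega
    | cons h t =>
      refine Finset.mem_image.2 ⟨(h, t), Finset.mem_product.2
        ⟨Finset.mem_univ _, mem_Free.2 ⟨by show t.length = n-1+ℓ; simp at hl; omega,
          tail_free hf⟩⟩, rfl⟩
  have hsub2 : U ⊆ T := by
    intro w hw
    rw [hU, Finset.mem_image] at hw
    obtain ⟨⟨c, v⟩, hcv, rfl⟩ := hw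
    rw [Finset.mem_product, mem_Free] at hcv
    have hcS := hcv.1
    have hvl : v.length = ℓ := hcv.2.1
    have hvf : ∀ d ∈ S, ¬ d <:+: v := hcv.2.2
    have hcn : c.length = n := hlen c hcS
    cases c with
    | nil => simp at hcn; omega
    | cons ch ct =>
      refine Finset.mem_image.2 ⟨(ch, ct ++ v), Finset.mem_product.2
        ⟨Finset.mem_univ _, mem_Free.2 ⟨?_, ?_⟩⟩, by simp⟩
      · show (ct ++ v).length = n - 1 + ℓ
        rw [List.length_append]
        simp only [List.length_cons] at hcn
        omega
      · have := keyUncorr hn hlen hmu hcS hvf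
        simpa using this
  have hdisj : Disjoint (Free S (n+ℓ)) U := by
    rw [Finset.disjoint_right]
    intro w hw hwf
    rw [hU, Finset.mem_image] at hw
    obtain ⟨⟨c, v⟩, hcv, rfl⟩ := hw
    rw [Finset.mem_product] at hcv
    exact (mem_Free.1 hwf).2 c hcv.1 ⟨[], v, by simp⟩
  calc (Free S (n+ℓ)).card + S.card * (Free S ℓ).card
      = (Free S (n+ℓ) ∪ U).card := by rw [Finset.card_union_of_disjoint hdisj, hUcard]
    _ ≤ T.card := Finset.card_le_card (Finset.union_subset hsub1 hsub2)
    _ = 4 * (Free S (n-1+ℓ)).card := hTcard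


lemma L1 (m : ℕ) : ∀ t : ℝ, 0 ≤ t → (m+1 : ℝ) * t^m ≤ 1 + m * t^(m+1) := by
  induction m with
  | zero => intro t ht; simp
  | succ m ih =>
    intro t ht
    have h := ih t ht
    have key : 0 ≤ (m+1 : ℝ) * t^m * (t-1)^2 := by positivity
    have e1 : t^(m+1) = t^m * t := pow_succ t m
    have e2 : t^(m+2) = t^m * t * t := by rw [pow_succ, pow_succ]
    push_cast
    nlinarith [h, key]

lemma L2 (N : ℕ) (hN : 1 ≤ N) (b : ℝ) (hb0 : 0 ≤ b) (hb1 : b ≤ 1) :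
    b^N * (1-b) ≤ (N:ℝ)^N / ((N:ℝ)+1)^(N+1) := by
  have hNpos : (0:ℝ) < N := by exact_mod_cast hN
  set t : ℝ := ((N:ℝ)+1) * b / N with htdef
  have ht : 0 ≤ t := by positivity
  have h := L1 N t ht
  have htN : t^N = ((N:ℝ)+1)^N * b^N / (N:ℝ)^N := by
    rw [htdef, div_pow, mul_pow]
  have htN1 : t^(N+1) = ((N:ℝ)+1)^(N+1) * b^(N+1) / (N:ℝ)^(N+1) := by
    rw [htdef, div_pow, mul_pow]
  rw [htN, htN1] at h
  rw [pow_succ ((N:ℝ)+1), pow_succ (N:ℝ), pow_succ b] at h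
  rw [pow_succ ((N:ℝ)+1)]
  field_simp at h
  rw [le_div_iff₀ (by positivity)]
  nlinarith [h, mul_pos (show (0:ℝ) < (N:ℝ)^N by positivity) hNpos]

noncomputable def bet (μ : ℝ) (N : ℕ) : ℕ → ℝ
  | 0 => 1
  | (k+1) => 1 - μ / (bet μ N k)^N

lemma analytic (N : ℕ) (hN : 1 ≤ N) (M : ℕ) (f : ℕ → ℕ)
    (h0 : ∀ ℓ, 1 ≤ f ℓ)
    (h1 : ∀ ℓ, f (ℓ+1) ≤ 4 * f ℓ)
    (h2 : ∀ ℓ, f (N+1+ℓ) + M * f ℓ ≤ 4 * f (N+ℓ)) :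
    (M : ℝ) ≤ 4^(N+1) * (N:ℝ)^N / ((N:ℝ)+1)^(N+1) := by
  by_contra hcon
  push_neg at hcon
  set μ : ℝ := (M:ℝ) / 4^(N+1) with hμ
  set c : ℝ := (N:ℝ)^N / ((N:ℝ)+1)^(N+1) with hc
  have hμc : c < μ := by
    rw [hμ, hc, lt_div_iff₀ (by positivity)]
    calc (N:ℝ)^N / ((N:ℝ)+1)^(N+1) * 4^(N+1)
        = 4^(N+1) * (N:ℝ)^N / ((N:ℝ)+1)^(N+1) := by ring
      _ < M := hcon
  have hμ0 : 0 ≤ μ := by positivity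
  have hc0 : 0 < c := by rw [hc]; positivity
  -- Lemma A
  have lemA : ∀ k, (∀ j, j < k → 0 < bet μ N j) →
      ∀ ℓ, (f (k*N + ℓ + 1) : ℝ) ≤ 4 * bet μ N k * (f (k*N + ℓ) : ℝ) := by
    intro k
    induction k with
    | zero =>
      intro _ ℓ
      have := h1 ℓ
      rw [bet]
      push_cast
      simpa using (by exact_mod_cast this : ((f (ℓ+1):ℝ) ≤ 4 * (f ℓ:ℝ)))
    | succ k ih =>
      intro hpos ℓ
      have hbk : 0 < bet μ N k := hpos k (Nat.lt_succ_self k)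
      have ihk := ih (fun j hj => hpos j (hj.trans (Nat.lt_succ_self k)))
      -- chain
      have chain : ∀ i ℓ', (f (k*N + ℓ' + i) : ℝ) ≤ (4 * bet μ N k)^i * f (k*N + ℓ') := by
        intro i
        induction i with
        | zero => intro ℓ'; simp
        | succ i ihc =>
          intro ℓ'
          have e1 : k*N + ℓ' + (i+1) = k*N + (ℓ' + i) + 1 := by ring
          have e2 : k*N + ℓ' + i = k*N + (ℓ' + i) := by ring
          calc (f (k*N + ℓ' + (i+1)) : ℝ) = f (k*N + (ℓ'+i) + 1) := by rw [e1]
            _ ≤ 4 * bet μ N k * f (k*N + (ℓ'+i)) := ihk _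
            _ ≤ 4 * bet μ N k * ((4 * bet μ N k)^i * f (k*N + ℓ')) := by
                apply mul_le_mul_of_nonneg_left _ (by positivity)
                rw [← e2]; exact ihc ℓ'
            _ = (4 * bet μ N k)^(i+1) * f (k*N + ℓ') := by ring
      -- apply chain with i = N at base ℓ
      have hch := chain N ℓ
      -- f ((k+1)*N + ℓ) ≤ (4 β_k)^N f (k*N + ℓ)
      have e3 : k*N + ℓ + N = (k+1)*N + ℓ := by ring
      rw [e3] at hch
      have hpow : (0:ℝ) < (4 * bet μ N k)^N := by positivity
      have hlow : (f ((k+1)*N + ℓ) : ℝ) / (4 * bet μ N k)^N ≤ f (k*N + ℓ) := by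
        rw [div_le_iff₀ hpow]
        calc (f ((k+1)*N + ℓ) : ℝ) ≤ (4 * bet μ N k)^N * f (k*N + ℓ) := hch
          _ = f (k*N + ℓ) * (4 * bet μ N k)^N := by ring
      -- recurrence h2 at base k*N + ℓ
      have hrec := h2 (k*N + ℓ)
      have e4 : N + 1 + (k*N + ℓ) = (k+1)*N + ℓ + 1 := by ring
      have e5 : N + (k*N + ℓ) = (k+1)*N + ℓ := by ring
      rw [e4, e5] at hrec
      have hrecR : (f ((k+1)*N + ℓ + 1) : ℝ) ≤ 4 * f ((k+1)*N + ℓ) - M * f (k*N + ℓ) := by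
        have : (f ((k+1)*N + ℓ + 1) : ℝ) + M * f (k*N + ℓ) ≤ 4 * f ((k+1)*N + ℓ) := by
          exact_mod_cast hrec
        linarith
      have hMnn : (0:ℝ) ≤ M := by positivity
      have step : (f ((k+1)*N + ℓ + 1) : ℝ) ≤
          4 * f ((k+1)*N + ℓ) - M * (f ((k+1)*N + ℓ) / (4 * bet μ N k)^N) := by
        have := mul_le_mul_of_nonneg_left hlow hMnn
        linarith
      have efinal : 4 * (f ((k+1)*N + ℓ):ℝ) - M * (f ((k+1)*N + ℓ) / (4 * bet μ N k)^N)
          = 4 * bet μ N (k+1) * f ((k+1)*N + ℓ) := by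
        show _ = 4 * (1 - μ / (bet μ N k)^N) * _
        have h4 : ((4:ℝ) * bet μ N k)^N = 4^N * (bet μ N k)^N := by rw [mul_pow]
        rw [h4]
        have hb : (bet μ N k)^N ≠ 0 := by positivity
        have hμ' : (M:ℝ) = μ * 4^(N+1) := by rw [hμ]; field_simp
        rw [hμ']
        field_simp
        ring
      rw [efinal] at step
      exact step
  -- Lemma B
  have betle1 : ∀ k, (∀ j, j ≤ k → 0 < bet μ N j) → bet μ N k ≤ 1 := by
    intro k hpos
    cases k with
    | zero => simp [bet]
    | succ k =>
      rw [bet]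
      have : 0 < bet μ N k := hpos k (Nat.le_succ k)
      have : 0 ≤ μ / (bet μ N k)^N := by positivity
      linarith
  have lemB : ∀ k, (∀ j, j ≤ k → 0 < bet μ N j) → bet μ N k ≤ 1 - k * (μ - c) := by
    intro k
    induction k with
    | zero => intro _; simp [bet]
    | succ k ih =>
      intro hpos
      have hposk : ∀ j, j ≤ k → 0 < bet μ N j := fun j hj => hpos j (hj.trans (Nat.le_succ k))
      have ihk := ih hposk
      have hbk : 0 < bet μ N k := hposk k le_rfl
      have hbk1 : bet μ N k ≤ 1 := betle1 k hposk
      -- key: bet (k+1) ≤ bet k - (μ - c)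
      have hkey : bet μ N (k+1) ≤ bet μ N k - (μ - c) := by
        rw [bet]
        set b := bet μ N k
        have hpoly : b^N * (1-b) ≤ c := L2 N hN b hbk.le hbk1
        have hbN : (0:ℝ) < b^N := by positivity
        have hbNle1 : b^N ≤ 1 := pow_le_one₀ hbk.le hbk1
        have hnum : 0 ≤ (μ - c) * (1 - b^N) :=
          mul_nonneg (sub_nonneg.2 hμc.le) (sub_nonneg.2 hbNle1)
        have step2 : 1 - (b - (μ - c)) ≤ μ / b^N := by
          rw [le_div_iff₀ hbN]
          nlinarith [hpoly, hnum]
        linarith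
      push_cast
      push_cast at ihk hkey
      linarith [ihk, hkey]
  -- find k0 minimal with bet μ N k0 ≤ 0
  have hex : ∃ k, bet μ N k ≤ 0 := by
    by_contra hall
    push_neg at hall
    obtain ⟨K, hK⟩ := exists_nat_gt (1 / (μ - c))
    have hB := lemB K (fun j _ => hall j)
    have hμcpos : 0 < μ - c := by linarith
    rw [div_lt_iff₀ hμcpos] at hK
    have : 0 < bet μ N K := hall K
    nlinarith [hB, hK]
  classical
  let k0 := Nat.find hex
  have hk0 : bet μ N k0 ≤ 0 := Nat.find_spec hex
  have hk0min : ∀ j, j < k0 → 0 < bet μ N j := by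
    intro j hj
    have := Nat.find_min hex hj
    linarith [lt_of_not_ge this]
  have hA := lemA k0 hk0min (0 : ℕ)
  have hf1 : (1:ℝ) ≤ f (k0*N + 0 + 1) := by exact_mod_cast h0 _
  have hf2 : (0:ℝ) ≤ f (k0*N + 0) := by positivity
  nlinarith [hA, hf1, hf2, hk0]


end StmtFourAux

/-- any mutually uncorrelated set of DNA words of length `n` has
size at most `(4^n / n) * (1 - 1/n)^(n-1)`. -/
theorem stmt4 (n : ℕ) (hn : 1 ≤ n) (S : Finset (List DNA))
    (hlen : ∀ w ∈ S, w.length = n)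
    (hmu : mutUncorr (S : Set (List DNA))) :
    (S.card : ℝ) ≤ (4 ^ n : ℝ) / n * (1 - 1 / n) ^ (n - 1) := by
  obtain ⟨N, rfl⟩ : ∃ N, n = N + 1 := ⟨n - 1, by omega⟩
  have hsub : S ⊆ allW (N+1) := fun w hw => mem_allW.2 (hlen w hw)
  rcases Nat.eq_zero_or_pos N with rfl | hN
  · -- n = 1
    have hcard : S.card ≤ 4 := by
      have := Finset.card_le_card hsub
      rwa [card_allW, pow_one] at this
    have : (S.card : ℝ) ≤ 4 := by exact_mod_cast hcard
    norm_num
    linarith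
  · -- n = N + 1, N ≥ 1
    have key := analytic N hN S.card (fun ℓ => (Free S ℓ).card)
      (F0 (by omega) hlen hmu.1)
      (fun ℓ => F1 ℓ)
      (fun ℓ => by
        have := F2 (n := N+1) (by omega) hlen hmu ℓ
        simpa using this)
    have hN0 : ((N:ℝ)+1) ≠ 0 := by positivity
    have eq1 : (1 - 1/((N:ℝ)+1)) = (N:ℝ)/((N:ℝ)+1) := by
      field_simp
      ring
    have eq2 : (4:ℝ)^(N+1) * (N:ℝ)^N / ((N:ℝ)+1)^(N+1)
        = (4^(N+1) : ℝ) / ((N:ℝ)+1) * ((N:ℝ)/((N:ℝ)+1))^N := by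
      rw [div_pow, pow_succ ((N:ℝ)+1)]
      field_simp
    calc (S.card : ℝ) ≤ (4:ℝ)^(N+1) * (N:ℝ)^N / ((N:ℝ)+1)^(N+1) := key
      _ = (4^(N+1) : ℝ) / ((N:ℝ)+1) * ((N:ℝ)/((N:ℝ)+1))^N := eq2
      _ = (4 ^ (N+1) : ℝ) / (↑(N+1)) * (1 - 1 / (↑(N+1))) ^ ((N+1) - 1) := by
          rw [← eq1]
          push_cast
          norm_num
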